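/- Let n ≥ 2. There exists a full (n+1)-coloring Γ of the standard n-sphere S^n such that every great (n−1)-sphere of S^n contains at most n colors; that is, for every n-dimensional linear subspace P of ℝ^{n+1}, the image Γ(S^n ∩ P) has at most n elements. -/

import Mathlib

open Classical in
/-- Triangular families of vectors are linearly independent. -/
lemma triangular_linearIndependent (m : ℕ) (v : Fin m → EuclideanSpace ℝ (Fin m))
    (hd : ∀ i, v i i ≠ 0) (ht : ∀ i j, (j : Fin m) < i → v i j = 0) :
    LinearIndependent ℝ v := by
  rw [Fintype.linearIndependent_iff]
  intro g hg
  by_contra hne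
  push_neg at hne
  obtain ⟨i, hi⟩ := hne
  have hnonempty : (Finset.univ.filter (fun i => g i ≠ 0)).Nonempty :=
    ⟨i, by simp [hi]⟩
  set i₀ := (Finset.univ.filter (fun i => g i ≠ 0)).min' hnonempty with hi₀
  have hgi₀ : g i₀ ≠ 0 := by
    have := Finset.min'_mem _ hnonempty
    simpa [hi₀] using this
  have hmin : ∀ j, j < i₀ → g j = 0 := by
    intro j hj
    by_contra hgj
    have : i₀ ≤ j := Finset.min'_le _ _ (by simp [hgj])
    exact absurd hj (not_lt.2 this)
  have h0 : (∑ j, g j • v j) i₀ = 0 := by rw [hg]; rfl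
  have : ∑ j, g j * v j i₀ = 0 := by
    have h1 : (∑ j, g j • v j) i₀ = ∑ j, (g j • v j) i₀ := by
      rw [WithLp.ofLp_sum]; exact Finset.sum_apply i₀ _ _
    simpa [h1, smul_eq_mul] using h0
  rw [Finset.sum_eq_single i₀] at this
  · exact hgi₀ (by
      have := mul_eq_zero.1 this
      tauto)
  · intro j _ hj
    rcases lt_or_gt_of_ne hj with h | h
    · rw [hmin j h, zero_mul]
    · rw [ht j i₀ h, mul_zero]
  · simp

/-- Sharpness (Euclidean analogue): for `n ≥ 2` there is a full `(n+1)`-coloring of the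
standard `n`-sphere in which every great `(n-1)`-sphere contains at most `n` colors. -/
theorem sharp_great_sphere_n_plus_one (n : ℕ) (hn : 2 ≤ n) :
    ∃ Γ : (Metric.sphere (0 : EuclideanSpace ℝ (Fin (n + 1))) 1) → Fin (n + 1),
      Function.Surjective Γ ∧
      ∀ P : Submodule ℝ (EuclideanSpace ℝ (Fin (n + 1))),
        Module.finrank ℝ P = n →
        (Γ '' {p | (p : EuclideanSpace ℝ (Fin (n + 1))) ∈ P}).ncard ≤ n := by
  classical
  -- nonzero vectors have a first nonzero coordinate
  have hne : ∀ x : (Metric.sphere (0 : EuclideanSpace ℝ (Fin (n + 1))) 1),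
      (Finset.univ.filter
        (fun i => (x : EuclideanSpace ℝ (Fin (n + 1))) i ≠ 0)).Nonempty := by
    intro x
    have hx : (x : EuclideanSpace ℝ (Fin (n + 1))) ≠ 0 := by
      have := x.2
      rw [mem_sphere_zero_iff_norm] at this
      intro h
      rw [h] at this
      simp at this
    by_contra hcon
    rw [Finset.not_nonempty_iff_eq_empty, Finset.filter_eq_empty_iff] at hcon
    apply hx
    ext i
    have := hcon (Finset.mem_univ i)
    simpa using this
  set Γ : (Metric.sphere (0 : EuclideanSpace ℝ (Fin (n + 1))) 1) → Fin (n + 1) :=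
    fun x => (Finset.univ.filter
      (fun i => (x : EuclideanSpace ℝ (Fin (n + 1))) i ≠ 0)).min' (hne x) with hΓ
  have hΓmem : ∀ x : (Metric.sphere (0 : EuclideanSpace ℝ (Fin (n + 1))) 1),
      (x : EuclideanSpace ℝ (Fin (n + 1))) (Γ x) ≠ 0 := by
    intro x
    have := Finset.min'_mem _ (hne x)
    simpa [hΓ] using this
  have hΓlt : ∀ x, ∀ j, j < Γ x → (x : EuclideanSpace ℝ (Fin (n + 1))) j = 0 := by
    intro x j hj
    by_contra hx
    have : Γ x ≤ j := Finset.min'_le _ _ (by simp [hx])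
    exact absurd hj (not_lt.2 this)
  refine ⟨Γ, ?_, ?_⟩
  · -- surjectivity
    intro i
    have hmem : EuclideanSpace.single i (1 : ℝ) ∈
        Metric.sphere (0 : EuclideanSpace ℝ (Fin (n + 1))) 1 := by
      rw [mem_sphere_zero_iff_norm, EuclideanSpace.norm_single]
      norm_num
    refine ⟨⟨EuclideanSpace.single i (1 : ℝ), hmem⟩, ?_⟩
    have h1 := hΓmem ⟨_, hmem⟩
    simp only [EuclideanSpace.single_apply] at h1
    by_contra hcon
    exact h1 (if_neg hcon)
  · -- every great sphere misses a color
    intro P hP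
    by_contra hcard
    push_neg at hcard
    set S : Set (Metric.sphere (0 : EuclideanSpace ℝ (Fin (n + 1))) 1) :=
      {p | (p : EuclideanSpace ℝ (Fin (n + 1))) ∈ P} with hS
    have himg : Γ '' S = Set.univ := by
      refine Set.eq_of_subset_of_ncard_le (Set.subset_univ _) ?_ Set.finite_univ
      rw [Set.ncard_univ]
      simp only [Nat.card_eq_fintype_card, Fintype.card_fin]
      omega
    -- pick for each color a point of `S` with that color
    have hexists : ∀ i : Fin (n + 1), ∃ p, p ∈ S ∧ Γ p = i := by
      intro i
      have : i ∈ Γ '' S := by rw [himg]; trivial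
      obtain ⟨p, hp, hpi⟩ := this
      exact ⟨p, hp, hpi⟩
    choose v hvS hvΓ using hexists
    set u : Fin (n + 1) → EuclideanSpace ℝ (Fin (n + 1)) := fun i => (v i : _) with hu
    have huP : ∀ i, u i ∈ P := fun i => hvS i
    have hud : ∀ i, u i i ≠ 0 := by
      intro i
      have := hΓmem (v i)
      rwa [hvΓ i] at this
    have hut : ∀ i j, (j : Fin (n + 1)) < i → u i j = 0 := by
      intro i j hj
      have := hΓlt (v i) j (by rwa [hvΓ i])
      exact this
    have hli : LinearIndependent ℝ u := triangular_linearIndependent _ u hud hut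
    set w : Fin (n + 1) → P := fun i => ⟨u i, huP i⟩ with hw
    have hliw : LinearIndependent ℝ w :=
      LinearIndependent.of_comp P.subtype hli
    have := hliw.fintype_card_le_finrank
    rw [hP, Fintype.card_fin] at this
    omega
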